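/- Let k be a field and A a k-biring. Then every finite subset of A is contained in a k-subalgebra W of A that is finitely generated as a k-algebra and satisfies S(W) ⊆ W, Δ⁺(W) ⊆ W′ and Δ×(W) ⊆ W′, where W′ denotes the image of W ⊗[k] W in A ⊗[k] A (the k-subalgebra of A ⊗[k] A generated by the elements w ⊗ 1 and 1 ⊗ w with w ∈ W). Consequently every affine ring scheme over a field is a filtered inverse limit of ring schemes of finite type. (Theorem 2.8 of the paper.) -/

import Mathlib

/- A `k`-biring: a commutative `k`-algebra `A` with coaddition, additive counit, antipode,
comultiplication and multiplicative counit, such that for every commutative `k`-algebra `R`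
the induced operations make `Hom_{k-alg}(A, R)` a commutative unital ring (equivalently, the
diagrammatic coring/codistributivity axioms hold). -/

open scoped TensorProduct

/-- The binary operation on `k`-algebra homomorphisms `A →ₐ[k] R` induced by a
comultiplication-type map `Δ : A →ₐ[k] A ⊗[k] A`: `(f, g) ↦ mult ∘ (f ⊗ g) ∘ Δ`. -/
noncomputable def ptOp (k A : Type) [Field k] [CommRing A] [Algebra k A]
    (Δ : A →ₐ[k] A ⊗[k] A) {R : Type} [CommRing R] [Algebra k R]
    (f g : A →ₐ[k] R) : A →ₐ[k] R :=
  (Algebra.TensorProduct.lmul' k (S := R)).comp ((Algebra.TensorProduct.map f g).comp Δ)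

/-- The constant point induced by a counit-type map `ε : A →ₐ[k] k`. -/
noncomputable def ptConst (k A : Type) [Field k] [CommRing A] [Algebra k A]
    (ε : A →ₐ[k] k) {R : Type} [CommRing R] [Algebra k R] : A →ₐ[k] R :=
  (Algebra.ofId k R).comp ε

/-- A `k`-biring structure on the commutative `k`-algebra `A`; equivalently, the structure of
an affine ring scheme on `Spec A` over `k`. -/
structure Biring (k A : Type) [Field k] [CommRing A] [Algebra k A] where
  coadd : A →ₐ[k] A ⊗[k] A
  counitAdd : A →ₐ[k] k
  antipode : A →ₐ[k] A
  comul : A →ₐ[k] A ⊗[k] A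
  counitMul : A →ₐ[k] k
  pt_add_assoc : ∀ (R : Type) [CommRing R] [Algebra k R] (f g h : A →ₐ[k] R),
    ptOp k A coadd (ptOp k A coadd f g) h = ptOp k A coadd f (ptOp k A coadd g h)
  pt_add_comm : ∀ (R : Type) [CommRing R] [Algebra k R] (f g : A →ₐ[k] R),
    ptOp k A coadd f g = ptOp k A coadd g f
  pt_zero_add : ∀ (R : Type) [CommRing R] [Algebra k R] (f : A →ₐ[k] R),
    ptOp k A coadd (ptConst k A counitAdd) f = f
  pt_add_neg : ∀ (R : Type) [CommRing R] [Algebra k R] (f : A →ₐ[k] R),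
    ptOp k A coadd f (f.comp antipode) = ptConst k A counitAdd
  pt_mul_assoc : ∀ (R : Type) [CommRing R] [Algebra k R] (f g h : A →ₐ[k] R),
    ptOp k A comul (ptOp k A comul f g) h = ptOp k A comul f (ptOp k A comul g h)
  pt_mul_comm : ∀ (R : Type) [CommRing R] [Algebra k R] (f g : A →ₐ[k] R),
    ptOp k A comul f g = ptOp k A comul g f
  pt_one_mul : ∀ (R : Type) [CommRing R] [Algebra k R] (f : A →ₐ[k] R),
    ptOp k A comul (ptConst k A counitMul) f = f
  pt_mul_add : ∀ (R : Type) [CommRing R] [Algebra k R] (f g h : A →ₐ[k] R),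
    ptOp k A comul f (ptOp k A coadd g h)
      = ptOp k A coadd (ptOp k A comul f g) (ptOp k A comul f h)

/-- The image of `W ⊗[k] W` in `A ⊗[k] A`: the `k`-subalgebra of `A ⊗[k] A` generated by the
elements `w ⊗ 1` and `1 ⊗ w` with `w ∈ W`. -/
noncomputable def tensorSq (k A : Type) [Field k] [CommRing A] [Algebra k A] (W : Subalgebra k A) :
    Subalgebra k (A ⊗[k] A) :=
  Algebra.adjoin k
    {x : A ⊗[k] A | ∃ w ∈ W, x = w ⊗ₜ[k] (1 : A) ∨ x = (1 : A) ⊗ₜ[k] w}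

namespace BiringAux

open Algebra.TensorProduct

variable {k A : Type} [Field k] [CommRing A] [Algebra k A] (B : Biring k A)
variable {R R' : Type} [CommRing R] [Algebra k R] [CommRing R'] [Algebra k R']

lemma pt_add_zero (f : A →ₐ[k] R) :
    ptOp k A B.coadd f (ptConst k A B.counitAdd) = f := by
  rw [B.pt_add_comm, B.pt_zero_add]

lemma pt_cancel {a b c : A →ₐ[k] R}
    (h : ptOp k A B.coadd a b = ptOp k A B.coadd a c) : b = c := by
  have h0 : ∀ x : A →ₐ[k] R,
      ptOp k A B.coadd (a.comp B.antipode) (ptOp k A B.coadd a x) = x := by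
    intro x
    rw [← B.pt_add_assoc, B.pt_add_comm _ (a.comp B.antipode) a, B.pt_add_neg, B.pt_zero_add]
  rw [← h0 b, h, h0 c]

lemma pt_mul_zero (g : A →ₐ[k] R) :
    ptOp k A B.comul g (ptConst k A B.counitAdd) = ptConst k A B.counitAdd := by
  apply pt_cancel B (a := ptOp k A B.comul g (ptConst k A B.counitAdd))
  conv_lhs => rw [← B.pt_mul_add, B.pt_zero_add]
  rw [pt_add_zero]

lemma pt_zero_mul (g : A →ₐ[k] R) :
    ptOp k A B.comul (ptConst k A B.counitAdd) g = ptConst k A B.counitAdd := by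
  rw [B.pt_mul_comm, pt_mul_zero]

lemma pt_add_mul (f g h : A →ₐ[k] R) :
    ptOp k A B.comul (ptOp k A B.coadd f g) h
      = ptOp k A B.coadd (ptOp k A B.comul f h) (ptOp k A B.comul g h) := by
  rw [B.pt_mul_comm, B.pt_mul_add, B.pt_mul_comm R h f, B.pt_mul_comm R h g]

lemma pt_neg_mul (f g : A →ₐ[k] R) :
    ptOp k A B.comul (f.comp B.antipode) g = (ptOp k A B.comul f g).comp B.antipode := by
  apply pt_cancel B (a := ptOp k A B.comul f g)
  rw [B.pt_add_neg, ← pt_add_mul, B.pt_add_neg, pt_zero_mul]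


lemma comp_ptOp (Δ : A →ₐ[k] A ⊗[k] A) (ψ : R →ₐ[k] R') (f g : A →ₐ[k] R) :
    ψ.comp (ptOp k A Δ f g) = ptOp k A Δ (ψ.comp f) (ψ.comp g) := by
  have key : (ψ.comp (Algebra.TensorProduct.lmul' k (S := R))).comp
        (Algebra.TensorProduct.map f g)
      = (Algebra.TensorProduct.lmul' k (S := R')).comp
        (Algebra.TensorProduct.map (ψ.comp f) (ψ.comp g)) := by
    ext x
    · simp
    · simp
  unfold ptOp
  rw [← AlgHom.comp_assoc, ← AlgHom.comp_assoc, ← AlgHom.comp_assoc, key]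

lemma comp_ptConst (ε : A →ₐ[k] k) (ψ : R →ₐ[k] R') :
    ψ.comp (ptConst k A ε) = ptConst k A ε := by
  unfold ptConst
  rw [← AlgHom.comp_assoc]
  congr 1
  exact Subsingleton.elim _ _

lemma ptOp_includeLR (Δ : A →ₐ[k] A ⊗[k] A) :
    ptOp k A Δ (Algebra.TensorProduct.includeLeft : A →ₐ[k] A ⊗[k] A)
      Algebra.TensorProduct.includeRight = Δ := by
  have key : (Algebra.TensorProduct.lmul' k (S := A ⊗[k] A)).comp
      (Algebra.TensorProduct.map
        (Algebra.TensorProduct.includeLeft : A →ₐ[k] A ⊗[k] A)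
        Algebra.TensorProduct.includeRight) = AlgHom.id k (A ⊗[k] A) := by
    ext x
    · simp
    · simp
  unfold ptOp
  rw [← AlgHom.comp_assoc, key, AlgHom.id_comp]

lemma ptOp_includeRL (Δ : A →ₐ[k] A ⊗[k] A) :
    ptOp k A Δ (Algebra.TensorProduct.includeRight : A →ₐ[k] A ⊗[k] A)
      Algebra.TensorProduct.includeLeft
      = (Algebra.TensorProduct.comm k A A).toAlgHom.comp Δ := by
  have key : (Algebra.TensorProduct.lmul' k (S := A ⊗[k] A)).comp
      (Algebra.TensorProduct.map
        (Algebra.TensorProduct.includeRight : A →ₐ[k] A ⊗[k] A)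
        Algebra.TensorProduct.includeLeft)
      = (Algebra.TensorProduct.comm k A A).toAlgHom := by
    ext x
    · simp
    · simp
  unfold ptOp
  rw [← AlgHom.comp_assoc, key]

lemma cocomm_coadd :
    (Algebra.TensorProduct.comm k A A).toAlgHom.comp B.coadd = B.coadd := by
  rw [← ptOp_includeRL, B.pt_add_comm, ptOp_includeLR]

lemma cocomm_comul :
    (Algebra.TensorProduct.comm k A A).toAlgHom.comp B.comul = B.comul := by
  rw [← ptOp_includeRL, B.pt_mul_comm, ptOp_includeLR]


section Rho

open Algebra.TensorProduct

/-- first inclusion `A → A ⊗ (A ⊗ A)` (the "r" leg). -/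
noncomputable def j1 : A →ₐ[k] A ⊗[k] (A ⊗[k] A) := includeLeft
/-- the "a" leg. -/
noncomputable def j2 : A →ₐ[k] A ⊗[k] (A ⊗[k] A) :=
  (includeRight : (A ⊗[k] A) →ₐ[k] A ⊗[k] (A ⊗[k] A)).comp includeLeft
/-- the "b" leg. -/
noncomputable def j3 : A →ₐ[k] A ⊗[k] (A ⊗[k] A) :=
  (includeRight : (A ⊗[k] A) →ₐ[k] A ⊗[k] (A ⊗[k] A)).comp includeRight

/-- The affine coaction `ρ : A → A ⊗ (A ⊗ A)`, `f ↦ ((r,(a,b)) ↦ f (a·r + b))`. -/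
noncomputable def rho : A →ₐ[k] A ⊗[k] (A ⊗[k] A) :=
  ptOp k A B.coadd (ptOp k A B.comul (j2 (k := k)) (j1 (k := k))) (j3 (k := k))

/-- comultiplication on `A ⊗ A` dual to composition of affine maps. -/
noncomputable def DeltaB : (A ⊗[k] A) →ₐ[k] (A ⊗[k] A) ⊗[k] (A ⊗[k] A) :=
  Algebra.TensorProduct.lift
    (ptOp k A B.comul
      ((includeRight : (A ⊗[k] A) →ₐ[k] (A ⊗[k] A) ⊗[k] (A ⊗[k] A)).comp includeLeft)
      ((includeLeft : (A ⊗[k] A) →ₐ[k] (A ⊗[k] A) ⊗[k] (A ⊗[k] A)).comp includeLeft))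
    (ptOp k A B.coadd
      (ptOp k A B.comul
        ((includeRight : (A ⊗[k] A) →ₐ[k] (A ⊗[k] A) ⊗[k] (A ⊗[k] A)).comp includeLeft)
        ((includeLeft : (A ⊗[k] A) →ₐ[k] (A ⊗[k] A) ⊗[k] (A ⊗[k] A)).comp includeRight))
      ((includeRight : (A ⊗[k] A) →ₐ[k] (A ⊗[k] A) ⊗[k] (A ⊗[k] A)).comp includeRight))
    (fun _ _ => Commute.all _ _)

lemma lift_comp_right {C : Type} [CommRing C] [Algebra k C]
    (f : A →ₐ[k] C) (g : A →ₐ[k] C) (hfg) :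
    (Algebra.TensorProduct.lift f g hfg).comp
      (includeRight : A →ₐ[k] A ⊗[k] A) = g :=
  AlgHom.ext fun x => by simp

lemma lift_comp_left {C : Type} [CommRing C] [Algebra k C]
    (f : A →ₐ[k] C) (g : A →ₐ[k] C) (hfg) :
    (Algebra.TensorProduct.lift f g hfg).comp
      (includeLeft : A →ₐ[k] A ⊗[k] A) = f :=
  AlgHom.ext fun x => by simp


section Coassoc

/-- the five coordinate points of `A ⊗ ((A⊗A) ⊗ (A⊗A))`. -/
noncomputable def qr : A →ₐ[k] A ⊗[k] ((A ⊗[k] A) ⊗[k] (A ⊗[k] A)) := includeLeft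
noncomputable def qa1 : A →ₐ[k] A ⊗[k] ((A ⊗[k] A) ⊗[k] (A ⊗[k] A)) :=
  (includeRight : ((A ⊗[k] A) ⊗[k] (A ⊗[k] A)) →ₐ[k] _).comp
    ((includeLeft : (A ⊗[k] A) →ₐ[k] (A ⊗[k] A) ⊗[k] (A ⊗[k] A)).comp includeLeft)
noncomputable def qb1 : A →ₐ[k] A ⊗[k] ((A ⊗[k] A) ⊗[k] (A ⊗[k] A)) :=
  (includeRight : ((A ⊗[k] A) ⊗[k] (A ⊗[k] A)) →ₐ[k] _).comp
    ((includeLeft : (A ⊗[k] A) →ₐ[k] (A ⊗[k] A) ⊗[k] (A ⊗[k] A)).comp includeRight)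
noncomputable def qa2 : A →ₐ[k] A ⊗[k] ((A ⊗[k] A) ⊗[k] (A ⊗[k] A)) :=
  (includeRight : ((A ⊗[k] A) ⊗[k] (A ⊗[k] A)) →ₐ[k] _).comp
    ((includeRight : (A ⊗[k] A) →ₐ[k] (A ⊗[k] A) ⊗[k] (A ⊗[k] A)).comp includeLeft)
noncomputable def qb2 : A →ₐ[k] A ⊗[k] ((A ⊗[k] A) ⊗[k] (A ⊗[k] A)) :=
  (includeRight : ((A ⊗[k] A) ⊗[k] (A ⊗[k] A)) →ₐ[k] _).comp
    ((includeRight : (A ⊗[k] A) →ₐ[k] (A ⊗[k] A) ⊗[k] (A ⊗[k] A)).comp includeRight)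

set_option maxHeartbeats 2000000 in
lemma coassoc :
    (Algebra.TensorProduct.map (AlgHom.id k A) (DeltaB B)).comp (rho B) =
      ((Algebra.TensorProduct.assoc k k k A (A ⊗[k] A) (A ⊗[k] A)).toAlgHom.comp
        ((Algebra.TensorProduct.map (rho B) (AlgHom.id k (A ⊗[k] A))).comp (rho B))) := by
  set R5 := A ⊗[k] ((A ⊗[k] A) ⊗[k] (A ⊗[k] A)) with hR5
  set Ps := Algebra.TensorProduct.map (AlgHom.id k A) (DeltaB B) with hPs
  set Th := (Algebra.TensorProduct.assoc k k k A (A ⊗[k] A) (A ⊗[k] A)).toAlgHom.comp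
      (Algebra.TensorProduct.map (rho B) (AlgHom.id k (A ⊗[k] A))) with hTh
  set Ph := (Algebra.TensorProduct.assoc k k k A (A ⊗[k] A) (A ⊗[k] A)).toAlgHom.comp
      (includeLeft : A ⊗[k] (A ⊗[k] A) →ₐ[k] (A ⊗[k] (A ⊗[k] A)) ⊗[k] (A ⊗[k] A)) with hPh
  have hL1 : Ps.comp (j1 (k := k)) = qr (k := k) := by
    ext1 x; simp [hPs, j1, qr]
  have hL2 : Ps.comp (j2 (k := k)) =
      ptOp k A B.comul (R := R5) (qa2 (k := k)) (qa1 (k := k)) := by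
    have e1 : Ps.comp (j2 (k := k)) =
        ((includeRight : ((A ⊗[k] A) ⊗[k] (A ⊗[k] A)) →ₐ[k] R5).comp
          (DeltaB B)).comp includeLeft := by
      ext1 x; simp [hPs, j2]
    rw [e1, AlgHom.comp_assoc, DeltaB, lift_comp_left]
    exact comp_ptOp B.comul (R' := R5) includeRight _ _
  have hL3 : Ps.comp (j3 (k := k)) =
      ptOp k A B.coadd (R := R5)
        (ptOp k A B.comul (R := R5) (qa2 (k := k)) (qb1 (k := k))) (qb2 (k := k)) := by
    have e1 : Ps.comp (j3 (k := k)) =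
        ((includeRight : ((A ⊗[k] A) ⊗[k] (A ⊗[k] A)) →ₐ[k] R5).comp
          (DeltaB B)).comp includeRight := by
      ext1 x; simp [hPs, j3]
    have e2 : (includeRight : ((A ⊗[k] A) ⊗[k] (A ⊗[k] A)) →ₐ[k] R5).comp
        (ptOp k A B.coadd
          (ptOp k A B.comul
            ((includeRight : (A ⊗[k] A) →ₐ[k] (A ⊗[k] A) ⊗[k] (A ⊗[k] A)).comp includeLeft)
            ((includeLeft : (A ⊗[k] A) →ₐ[k] (A ⊗[k] A) ⊗[k] (A ⊗[k] A)).comp includeRight))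
          ((includeRight : (A ⊗[k] A) →ₐ[k] (A ⊗[k] A) ⊗[k] (A ⊗[k] A)).comp includeRight)) =
        ptOp k A B.coadd (R := R5)
          ((includeRight : ((A ⊗[k] A) ⊗[k] (A ⊗[k] A)) →ₐ[k] R5).comp
            (ptOp k A B.comul
              ((includeRight : (A ⊗[k] A) →ₐ[k] (A ⊗[k] A) ⊗[k] (A ⊗[k] A)).comp includeLeft)
              ((includeLeft : (A ⊗[k] A) →ₐ[k] (A ⊗[k] A) ⊗[k] (A ⊗[k] A)).comp includeRight)))
          (qb2 (k := k)) :=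
      comp_ptOp B.coadd (R' := R5) includeRight _ _
    have e3 : (includeRight : ((A ⊗[k] A) ⊗[k] (A ⊗[k] A)) →ₐ[k] R5).comp
        (ptOp k A B.comul
          ((includeRight : (A ⊗[k] A) →ₐ[k] (A ⊗[k] A) ⊗[k] (A ⊗[k] A)).comp includeLeft)
          ((includeLeft : (A ⊗[k] A) →ₐ[k] (A ⊗[k] A) ⊗[k] (A ⊗[k] A)).comp includeRight)) =
        ptOp k A B.comul (R := R5) (qa2 (k := k)) (qb1 (k := k)) :=
      comp_ptOp B.comul (R' := R5) includeRight _ _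
    rw [e1, AlgHom.comp_assoc, DeltaB, lift_comp_right, e2, e3]
  have hq1 : Ph.comp (j1 (k := k)) = qr (k := k) := by
    ext1 x; simp [hPh, j1, qr, Algebra.TensorProduct.one_def]
  have hq2 : Ph.comp (j2 (k := k)) = qa1 (k := k) := by
    ext1 x; simp [hPh, j2, qa1, Algebra.TensorProduct.one_def]
  have hq3 : Ph.comp (j3 (k := k)) = qb1 (k := k) := by
    ext1 x; simp [hPh, j3, qb1, Algebra.TensorProduct.one_def]
  have hT1 : Th.comp (j1 (k := k)) = Ph.comp (rho B) := by
    have h0 : (Algebra.TensorProduct.map (rho B) (AlgHom.id k (A ⊗[k] A))).comp (j1 (k := k)) =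
        (includeLeft : A ⊗[k] (A ⊗[k] A) →ₐ[k] (A ⊗[k] (A ⊗[k] A)) ⊗[k] (A ⊗[k] A)).comp
          (rho B) := by
      ext1 x; simp [j1]
    rw [hTh, hPh, AlgHom.comp_assoc, h0, ← AlgHom.comp_assoc]
  have hT2 : Th.comp (j2 (k := k)) = qa2 (k := k) := by
    rw [hTh]; ext1 x; simp [j2, qa2, Algebra.TensorProduct.one_def]
  have hT3 : Th.comp (j3 (k := k)) = qb2 (k := k) := by
    rw [hTh]; ext1 x; simp [j3, qb2, Algebra.TensorProduct.one_def]
  have c1 : Th.comp (rho B) =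
      ptOp k A B.coadd (R := R5)
        (Th.comp (ptOp k A B.comul (j2 (k := k)) (j1 (k := k)))) (Th.comp (j3 (k := k))) :=
    comp_ptOp B.coadd (R' := R5) Th _ _
  have c2 : Th.comp (ptOp k A B.comul (j2 (k := k)) (j1 (k := k))) =
      ptOp k A B.comul (R := R5) (Th.comp (j2 (k := k))) (Th.comp (j1 (k := k))) :=
    comp_ptOp B.comul (R' := R5) Th _ _
  have c3 : Ph.comp (rho B) =
      ptOp k A B.coadd (R := R5)
        (Ph.comp (ptOp k A B.comul (j2 (k := k)) (j1 (k := k)))) (Ph.comp (j3 (k := k))) :=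
    comp_ptOp B.coadd (R' := R5) Ph _ _
  have c4 : Ph.comp (ptOp k A B.comul (j2 (k := k)) (j1 (k := k))) =
      ptOp k A B.comul (R := R5) (Ph.comp (j2 (k := k))) (Ph.comp (j1 (k := k))) :=
    comp_ptOp B.comul (R' := R5) Ph _ _
  have c5 : Ps.comp (rho B) =
      ptOp k A B.coadd (R := R5)
        (Ps.comp (ptOp k A B.comul (j2 (k := k)) (j1 (k := k)))) (Ps.comp (j3 (k := k))) :=
    comp_ptOp B.coadd (R' := R5) Ps _ _
  have c6 : Ps.comp (ptOp k A B.comul (j2 (k := k)) (j1 (k := k))) =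
      ptOp k A B.comul (R := R5) (Ps.comp (j2 (k := k))) (Ps.comp (j1 (k := k))) :=
    comp_ptOp B.comul (R' := R5) Ps _ _
  show Ps.comp (rho B) = Th.comp (rho B)
  rw [c5, c6, hL1, hL2, hL3, c1, c2, hT1, c3, c4, hq1, hq2, hq3, hT2, hT3]
  rw [B.pt_mul_add, ← B.pt_mul_assoc, ← B.pt_add_assoc]

end Coassoc

section Extract

/-- counit of the affine monoid coalgebra: evaluation at `(a,b) = (1,0)`. -/
noncomputable def epsB : (A ⊗[k] A) →ₐ[k] k :=
  Algebra.TensorProduct.lift B.counitMul B.counitAdd (fun _ _ => Commute.all _ _)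

/-- evaluation at `(a,b) = (-1,0)`. -/
noncomputable def hSB : (A ⊗[k] A) →ₐ[k] k :=
  Algebra.TensorProduct.lift (B.counitMul.comp B.antipode) B.counitAdd
    (fun _ _ => Commute.all _ _)

noncomputable def psi0 : A ⊗[k] (A ⊗[k] A) →ₐ[k] A :=
  Algebra.TensorProduct.lift (AlgHom.id k A) ((Algebra.ofId k A).comp (epsB B))
    (fun _ _ => Commute.all _ _)

noncomputable def psiS : A ⊗[k] (A ⊗[k] A) →ₐ[k] A :=
  Algebra.TensorProduct.lift (AlgHom.id k A) ((Algebra.ofId k A).comp (hSB B))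
    (fun _ _ => Commute.all _ _)

noncomputable def gplus : (A ⊗[k] A) →ₐ[k] A :=
  Algebra.TensorProduct.lift ((Algebra.ofId k A).comp B.counitMul) (AlgHom.id k A)
    (fun _ _ => Commute.all _ _)

noncomputable def psiP : A ⊗[k] (A ⊗[k] A) →ₐ[k] A ⊗[k] A :=
  Algebra.TensorProduct.map (AlgHom.id k A) (gplus B)

noncomputable def gmul : (A ⊗[k] A) →ₐ[k] A :=
  Algebra.TensorProduct.lift (AlgHom.id k A) ((Algebra.ofId k A).comp B.counitAdd)
    (fun _ _ => Commute.all _ _)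

noncomputable def psiM : A ⊗[k] (A ⊗[k] A) →ₐ[k] A ⊗[k] A :=
  Algebra.TensorProduct.map (AlgHom.id k A) (gmul B)

lemma psi0_rho : (psi0 B).comp (rho B) = AlgHom.id k A := by
  have c1 : (psi0 B).comp (rho B) =
      ptOp k A B.coadd (R := A)
        ((psi0 B).comp (ptOp k A B.comul (j2 (k := k)) (j1 (k := k))))
        ((psi0 B).comp (j3 (k := k))) :=
    comp_ptOp B.coadd (R' := A) (psi0 B) _ _
  have c2 : (psi0 B).comp (ptOp k A B.comul (j2 (k := k)) (j1 (k := k))) =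
      ptOp k A B.comul (R := A)
        ((psi0 B).comp (j2 (k := k))) ((psi0 B).comp (j1 (k := k))) :=
    comp_ptOp B.comul (R' := A) (psi0 B) _ _
  have h1 : (psi0 B).comp (j1 (k := k)) = AlgHom.id k A := by
    ext1 x; simp [psi0, j1, epsB]
  have h2 : (psi0 B).comp (j2 (k := k)) = ptConst k A B.counitMul := by
    ext1 x; simp [psi0, j2, epsB, ptConst, Algebra.ofId_apply]
  have h3 : (psi0 B).comp (j3 (k := k)) = ptConst k A B.counitAdd := by
    ext1 x; simp [psi0, j3, epsB, ptConst, Algebra.ofId_apply]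
  rw [c1, c2, h1, h2, h3, B.pt_one_mul, pt_add_zero]

lemma psiS_rho : (psiS B).comp (rho B) = B.antipode := by
  have c1 : (psiS B).comp (rho B) =
      ptOp k A B.coadd (R := A)
        ((psiS B).comp (ptOp k A B.comul (j2 (k := k)) (j1 (k := k))))
        ((psiS B).comp (j3 (k := k))) :=
    comp_ptOp B.coadd (R' := A) (psiS B) _ _
  have c2 : (psiS B).comp (ptOp k A B.comul (j2 (k := k)) (j1 (k := k))) =
      ptOp k A B.comul (R := A)
        ((psiS B).comp (j2 (k := k))) ((psiS B).comp (j1 (k := k))) :=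
    comp_ptOp B.comul (R' := A) (psiS B) _ _
  have h1 : (psiS B).comp (j1 (k := k)) = AlgHom.id k A := by
    ext1 x; simp [psiS, j1, hSB]
  have h2 : (psiS B).comp (j2 (k := k)) = (ptConst k A B.counitMul).comp B.antipode := by
    ext1 x; simp [psiS, j2, hSB, ptConst, Algebra.ofId_apply]
  have h3 : (psiS B).comp (j3 (k := k)) = ptConst k A B.counitAdd := by
    ext1 x; simp [psiS, j3, hSB, ptConst, Algebra.ofId_apply]
  rw [c1, c2, h1, h2, h3, pt_add_zero, pt_neg_mul, B.pt_one_mul, AlgHom.id_comp]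

lemma psiP_rho : (psiP B).comp (rho B) = B.coadd := by
  have c1 : (psiP B).comp (rho B) =
      ptOp k A B.coadd (R := A ⊗[k] A)
        ((psiP B).comp (ptOp k A B.comul (j2 (k := k)) (j1 (k := k))))
        ((psiP B).comp (j3 (k := k))) :=
    comp_ptOp B.coadd (R' := A ⊗[k] A) (psiP B) _ _
  have c2 : (psiP B).comp (ptOp k A B.comul (j2 (k := k)) (j1 (k := k))) =
      ptOp k A B.comul (R := A ⊗[k] A)
        ((psiP B).comp (j2 (k := k))) ((psiP B).comp (j1 (k := k))) :=
    comp_ptOp B.comul (R' := A ⊗[k] A) (psiP B) _ _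
  have h1 : (psiP B).comp (j1 (k := k)) =
      (Algebra.TensorProduct.includeLeft : A →ₐ[k] A ⊗[k] A) := by
    ext1 x; simp [psiP, j1, gplus]
  have h2 : (psiP B).comp (j2 (k := k)) = ptConst k A B.counitMul (R := A ⊗[k] A) := by
    ext1 x
    simp [psiP, j2, gplus, ptConst, Algebra.ofId_apply, Algebra.TensorProduct.algebraMap_apply,
      Algebra.algebraMap_eq_smul_one, TensorProduct.smul_tmul, Algebra.TensorProduct.one_def]
  have h3 : (psiP B).comp (j3 (k := k)) =
      (Algebra.TensorProduct.includeRight : A →ₐ[k] A ⊗[k] A) := by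
    ext1 x; simp [psiP, j3, gplus]
  rw [c1, c2, h1, h2, h3, B.pt_one_mul, ptOp_includeLR]

lemma psiM_rho : (psiM B).comp (rho B) = B.comul := by
  have c1 : (psiM B).comp (rho B) =
      ptOp k A B.coadd (R := A ⊗[k] A)
        ((psiM B).comp (ptOp k A B.comul (j2 (k := k)) (j1 (k := k))))
        ((psiM B).comp (j3 (k := k))) :=
    comp_ptOp B.coadd (R' := A ⊗[k] A) (psiM B) _ _
  have c2 : (psiM B).comp (ptOp k A B.comul (j2 (k := k)) (j1 (k := k))) =
      ptOp k A B.comul (R := A ⊗[k] A)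
        ((psiM B).comp (j2 (k := k))) ((psiM B).comp (j1 (k := k))) :=
    comp_ptOp B.comul (R' := A ⊗[k] A) (psiM B) _ _
  have h1 : (psiM B).comp (j1 (k := k)) =
      (Algebra.TensorProduct.includeLeft : A →ₐ[k] A ⊗[k] A) := by
    ext1 x; simp [psiM, j1, gmul]
  have h2 : (psiM B).comp (j2 (k := k)) =
      (Algebra.TensorProduct.includeRight : A →ₐ[k] A ⊗[k] A) := by
    ext1 x; simp [psiM, j2, gmul]
  have h3 : (psiM B).comp (j3 (k := k)) = ptConst k A B.counitAdd (R := A ⊗[k] A) := by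
    ext1 x
    simp [psiM, j3, gmul, ptConst, Algebra.ofId_apply, Algebra.TensorProduct.algebraMap_apply,
      Algebra.algebraMap_eq_smul_one, TensorProduct.smul_tmul, Algebra.TensorProduct.one_def]
  rw [c1, c2, h1, h2, h3, pt_add_zero, ptOp_includeRL, cocomm_comul]

end Extract


end Rho


section Coeff

variable {ι : Type} [DecidableEq ι] (bB : Module.Basis ι k (A ⊗[k] A))

/-- coefficients of an element of `A ⊗ (A ⊗ A)` with respect to a basis of `A ⊗ A`. -/
noncomputable def coeff : (A ⊗[k] (A ⊗[k] A)) ≃ₗ[k] (ι →₀ A) :=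
  (TensorProduct.congr (LinearEquiv.refl k A) bB.repr).trans
    (TensorProduct.finsuppScalarRight k k A ι)

lemma coeff_tmul (a : A) (u : A ⊗[k] A) (j : ι) :
    coeff bB (a ⊗ₜ[k] u) j = bB.repr u j • a := by
  simp [coeff, TensorProduct.finsuppScalarRight_apply_tmul_apply]

lemma coeff_tmul_basis (a : A) (j : ι) :
    coeff bB (a ⊗ₜ[k] bB j) = Finsupp.single j a := by
  ext j'
  rw [coeff_tmul, Module.Basis.repr_self, Finsupp.single_apply, Finsupp.single_apply,
    ite_smul, one_smul, zero_smul]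

lemma coeff_recon (t : A ⊗[k] (A ⊗[k] A)) :
    ((coeff bB t).sum fun j a => a ⊗ₜ[k] bB j) = t := by
  apply (coeff bB).injective
  rw [map_finsuppSum]
  simp only [coeff_tmul_basis]
  exact Finsupp.sum_single _

lemma sum_delta (g : ι →₀ A) (m : ι) :
    (g.sum fun m' d => (if m' = m then (1:k) else 0) • d) = g m := by
  unfold Finsupp.sum
  simp only [ite_smul, one_smul, zero_smul]
  rw [Finset.sum_ite_eq' g.support m g]
  by_cases h : m ∈ g.support
  · rw [if_pos h]
  · rw [if_neg h, eq_comm]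
    exact Finsupp.notMem_support_iff.mp h

/-- contraction of the rightmost leg with a linear functional. -/
noncomputable def contr (φ : ((A ⊗[k] A) ⊗[k] (A ⊗[k] A)) →ₗ[k] k) :
    A ⊗[k] ((A ⊗[k] A) ⊗[k] (A ⊗[k] A)) →ₗ[k] A :=
  (TensorProduct.rid k A).toLinearMap ∘ₗ (TensorProduct.map LinearMap.id φ)

lemma contr_tmul (φ : ((A ⊗[k] A) ⊗[k] (A ⊗[k] A)) →ₗ[k] k) (a : A)
    (w : (A ⊗[k] A) ⊗[k] (A ⊗[k] A)) : contr φ (a ⊗ₜ[k] w) = φ w • a := by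
  simp [contr]

/-- the product of two coordinate functionals on the two tensor factors. -/
noncomputable def phi2 (m i : ι) : ((A ⊗[k] A) ⊗[k] (A ⊗[k] A)) →ₗ[k] k :=
  (TensorProduct.lid k k).toLinearMap ∘ₗ TensorProduct.map (bB.coord m) (bB.coord i)

lemma phi2_tmul (m i : ι) (u v : A ⊗[k] A) :
    phi2 bB m i (u ⊗ₜ[k] v) = bB.repr u m * bB.repr v i := by
  simp [phi2, smul_eq_mul, Module.Basis.coord_apply]

end Coeff

section Main

variable {ι : Type} [DecidableEq ι] (bB : Module.Basis ι k (A ⊗[k] A))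

/-- the coefficients of `ρ x`. -/
noncomputable def Fc (x : A) : ι →₀ A := coeff bB (rho B x)

lemma Fc_zero : Fc B bB 0 = 0 := by simp [Fc]

lemma Fc_add (x y : A) : Fc B bB (x + y) = Fc B bB x + Fc B bB y := by simp [Fc]

lemma Fc_smul (c : k) (x : A) : Fc B bB (c • x) = c • Fc B bB x := by
  simp [Fc, map_smul]

lemma rho_recon (x : A) : ((Fc B bB x).sum fun j a => a ⊗ₜ[k] bB j) = rho B x :=
  coeff_recon bB (rho B x)

lemma main_closure (x : A) (i m : ι) :
    Fc B bB (Fc B bB x i) m ∈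
      Submodule.span k (Fc B bB x '' ↑(Fc B bB x).support) := by
  have hco := AlgHom.congr_fun (coassoc B) x
  -- expand the left side
  have hL : (Algebra.TensorProduct.map (AlgHom.id k A) (DeltaB B)) (rho B x) =
      (Fc B bB x).sum fun j a => a ⊗ₜ[k] (DeltaB B (bB j)) := by
    conv_lhs => rw [← rho_recon B bB x]
    rw [map_finsuppSum]
    simp only [Algebra.TensorProduct.map_tmul, AlgHom.coe_id, id_eq]
  -- expand the right side
  have h1 : (Algebra.TensorProduct.map (rho B) (AlgHom.id k (A ⊗[k] A))) (rho B x) =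
      (Fc B bB x).sum fun j a => (rho B a) ⊗ₜ[k] bB j := by
    conv_lhs => rw [← rho_recon B bB x]
    rw [map_finsuppSum]
    simp only [Algebra.TensorProduct.map_tmul, AlgHom.coe_id, id_eq]
  have hR : (Algebra.TensorProduct.assoc k k k A (A ⊗[k] A) (A ⊗[k] A)).toAlgHom
        ((Algebra.TensorProduct.map (rho B) (AlgHom.id k (A ⊗[k] A))) (rho B x)) =
      (Fc B bB x).sum fun j a =>
        (Fc B bB a).sum fun m' d => d ⊗ₜ[k] ((bB m') ⊗ₜ[k] (bB j)) := by
    rw [h1, map_finsuppSum]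
    refine Finsupp.sum_congr (fun j _ => ?_)
    conv_lhs => rw [← rho_recon B bB (Fc B bB x j)]
    rw [Finsupp.sum, Finsupp.sum, TensorProduct.sum_tmul, map_sum]
    refine Finset.sum_congr rfl (fun m' _ => ?_)
    simp
  have hco2 : ((Fc B bB x).sum fun j a => a ⊗ₜ[k] (DeltaB B (bB j))) =
      (Fc B bB x).sum fun j a =>
        (Fc B bB a).sum fun m' d => d ⊗ₜ[k] ((bB m') ⊗ₜ[k] (bB j)) := by
    rw [← hL, ← hR]
    simpa only [AlgHom.comp_apply] using hco
  -- contract both sides with `phi2 m i`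
  have hE := congrArg (contr (phi2 bB m i)) hco2
  rw [map_finsuppSum, map_finsuppSum] at hE
  -- compute the right-hand side of hE
  have hRE : ((Fc B bB x).sum fun j a =>
      contr (phi2 bB m i) ((Fc B bB a).sum fun m' d => d ⊗ₜ[k] ((bB m') ⊗ₜ[k] (bB j)))) =
      Fc B bB (Fc B bB x i) m := by
    have inner : ∀ (j : ι) (a : A),
        contr (phi2 bB m i) ((Fc B bB a).sum fun m' d => d ⊗ₜ[k] ((bB m') ⊗ₜ[k] (bB j))) =
        (if j = i then (1:k) else 0) • Fc B bB a m := by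
      intro j a
      rw [map_finsuppSum]
      have key : ∀ (m' : ι) (d : A),
          contr (phi2 bB m i) (d ⊗ₜ[k] ((bB m') ⊗ₜ[k] (bB j))) =
          (if j = i then (1:k) else 0) • ((if m' = m then (1:k) else 0) • d) := by
        intro m' d
        rw [contr_tmul, phi2_tmul]
        simp only [Module.Basis.repr_self, Finsupp.single_apply]
        rw [smul_smul, mul_comm]
      have step : ((Fc B bB a).sum fun m' d =>
          contr (phi2 bB m i) (d ⊗ₜ[k] ((bB m') ⊗ₜ[k] (bB j)))) =
          ((Fc B bB a).sum fun m' d =>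
            (if j = i then (1:k) else 0) • ((if m' = m then (1:k) else 0) • d)) :=
        Finsupp.sum_congr (fun m' _ => key m' _)
      rw [step, ← Finsupp.smul_sum, sum_delta]
    have step2 : ((Fc B bB x).sum fun j a =>
        contr (phi2 bB m i) ((Fc B bB a).sum fun m' d => d ⊗ₜ[k] ((bB m') ⊗ₜ[k] (bB j)))) =
        ((Fc B bB x).sum fun j a => (if j = i then (1:k) else 0) • Fc B bB a m) :=
      Finsupp.sum_congr (fun j _ => inner j _)
    rw [step2]
    unfold Finsupp.sum
    simp only [ite_smul, one_smul, zero_smul]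
    rw [Finset.sum_ite_eq' (Fc B bB x).support i (fun j => Fc B bB (Fc B bB x j) m)]
    by_cases h : i ∈ (Fc B bB x).support
    · rw [if_pos h]
    · rw [if_neg h, Finsupp.notMem_support_iff.mp h, Fc_zero]
      simp
  rw [hRE] at hE
  rw [← hE]
  refine Submodule.sum_mem _ (fun j hj => ?_)
  show contr (phi2 bB m i) ((Fc B bB x j) ⊗ₜ[k] (DeltaB B) (bB j)) ∈
    Submodule.span k (Fc B bB x '' ↑(Fc B bB x).support)
  rw [contr_tmul]
  exact Submodule.smul_mem _ _ (Submodule.subset_span (Set.mem_image_of_mem _ hj))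

end Main

section Elem

variable {ι : Type} [DecidableEq ι] (bB : Module.Basis ι k (A ⊗[k] A))

lemma counit_elem (v : A) :
    v = (Fc B bB v).sum fun j d => (epsB B (bB j)) • d := by
  have h := AlgHom.congr_fun (psi0_rho B) v
  simp only [AlgHom.comp_apply, AlgHom.coe_id, id_eq] at h
  conv_lhs => rw [← h]
  rw [← rho_recon B bB v, map_finsuppSum]
  refine Finsupp.sum_congr (fun j _ => ?_)
  simp [psi0, Algebra.ofId_apply, Algebra.smul_def, mul_comm]

lemma antipode_elem (v : A) :
    B.antipode v = (Fc B bB v).sum fun j d => (hSB B (bB j)) • d := by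
  conv_lhs => rw [← AlgHom.congr_fun (psiS_rho B) v]
  rw [AlgHom.comp_apply, ← rho_recon B bB v, map_finsuppSum]
  refine Finsupp.sum_congr (fun j _ => ?_)
  simp [psiS, Algebra.ofId_apply, Algebra.smul_def, mul_comm]

lemma coadd_elem (v : A) :
    B.coadd v = (Fc B bB v).sum fun j d => d ⊗ₜ[k] (gplus B (bB j)) := by
  conv_lhs => rw [← AlgHom.congr_fun (psiP_rho B) v]
  rw [AlgHom.comp_apply, ← rho_recon B bB v, map_finsuppSum]
  refine Finsupp.sum_congr (fun j _ => ?_)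
  simp [psiP]

lemma comul_elem (v : A) :
    B.comul v = (Fc B bB v).sum fun j d => d ⊗ₜ[k] (gmul B (bB j)) := by
  conv_lhs => rw [← AlgHom.congr_fun (psiM_rho B) v]
  rw [AlgHom.comp_apply, ← rho_recon B bB v, map_finsuppSum]
  refine Finsupp.sum_congr (fun j _ => ?_)
  simp [psiM]

lemma coadd_elem_swap (v : A) :
    B.coadd v = (Fc B bB v).sum fun j d => (gplus B (bB j)) ⊗ₜ[k] d := by
  calc B.coadd v
      = (Algebra.TensorProduct.comm k A A).toAlgHom (B.coadd v) :=
        (AlgHom.congr_fun (cocomm_coadd B) v).symm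
    _ = (Fc B bB v).sum fun j d => (gplus B (bB j)) ⊗ₜ[k] d := by
        rw [coadd_elem B bB v, map_finsuppSum]
        refine Finsupp.sum_congr (fun j _ => ?_)
        simp

lemma comul_elem_swap (v : A) :
    B.comul v = (Fc B bB v).sum fun j d => (gmul B (bB j)) ⊗ₜ[k] d := by
  calc B.comul v
      = (Algebra.TensorProduct.comm k A A).toAlgHom (B.comul v) :=
        (AlgHom.congr_fun (cocomm_comul B) v).symm
    _ = (Fc B bB v).sum fun j d => (gmul B (bB j)) ⊗ₜ[k] d := by
        rw [comul_elem B bB v, map_finsuppSum]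
        refine Finsupp.sum_congr (fun j _ => ?_)
        simp

end Elem

section Intersect

lemma exists_proj (V : Submodule k A) : ∃ pr : A →ₗ[k] V, ∀ v ∈ V, (pr v : A) = v := by
  obtain ⟨C, hC⟩ := Submodule.exists_isCompl V
  exact ⟨V.linearProjOfIsCompl C hC, fun v hv => by
    exact congrArg Subtype.val (Submodule.linearProjOfIsCompl_apply_left hC ⟨v, hv⟩)⟩

lemma map_proj_fix_left (V : Submodule k A) (π : A →ₗ[k] A) (hπ1 : ∀ v ∈ V, π v = v)
    (t : V ⊗[k] A) :
    TensorProduct.map π LinearMap.id (TensorProduct.map V.subtype LinearMap.id t)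
      = TensorProduct.map V.subtype LinearMap.id t := by
  induction t using TensorProduct.induction_on with
  | zero => simp
  | tmul v a =>
      simp only [TensorProduct.map_tmul, LinearMap.id_coe, id_eq, Submodule.coe_subtype]
      rw [hπ1 v.1 v.2]
  | add a b ha hb => simp only [map_add, ha, hb]

lemma map_proj_fix_right (V : Submodule k A) (π : A →ₗ[k] A) (hπ1 : ∀ v ∈ V, π v = v)
    (t : A ⊗[k] V) :
    TensorProduct.map LinearMap.id π (TensorProduct.map LinearMap.id V.subtype t)
      = TensorProduct.map LinearMap.id V.subtype t := by
  induction t using TensorProduct.induction_on with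
  | zero => simp
  | tmul a v =>
      simp only [TensorProduct.map_tmul, LinearMap.id_coe, id_eq, Submodule.coe_subtype]
      rw [hπ1 v.1 v.2]
  | add a b ha hb => simp only [map_add, ha, hb]

lemma tensor_intersect (V : Submodule k A) (u : A ⊗[k] A)
    (h1 : u ∈ LinearMap.range
      (TensorProduct.map V.subtype (LinearMap.id (R := k) (M := A))))
    (h2 : u ∈ LinearMap.range
      (TensorProduct.map (LinearMap.id (R := k) (M := A)) V.subtype)) :
    u ∈ LinearMap.range (TensorProduct.map V.subtype V.subtype) := by
  obtain ⟨pr, hpr⟩ := exists_proj (k := k) V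
  set π : A →ₗ[k] A := V.subtype ∘ₗ pr with hπ
  have hπ1 : ∀ v ∈ V, π v = v := fun v hv => by simp [hπ, hpr v hv]
  have k1 : TensorProduct.map π LinearMap.id u = u := by
    obtain ⟨t, rfl⟩ := h1
    exact map_proj_fix_left V π hπ1 t
  have k2 : TensorProduct.map LinearMap.id π u = u := by
    obtain ⟨t, rfl⟩ := h2
    exact map_proj_fix_right V π hπ1 t
  have k3 : u = TensorProduct.map V.subtype V.subtype (TensorProduct.map pr pr u) := by
    conv_lhs => rw [← k2, ← k1]
    rw [← LinearMap.comp_apply, ← TensorProduct.map_comp, ← LinearMap.comp_apply,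
      ← TensorProduct.map_comp]
    congr 1 <;> ext x <;> simp [hπ]
  exact ⟨TensorProduct.map pr pr u, k3.symm⟩

lemma mem_range_left (V : Submodule k A) {ι : Type} (c : ι →₀ A) (f : ι → A)
    (hc : ∀ j ∈ c.support, c j ∈ V) :
    (c.sum fun j d => d ⊗ₜ[k] f j) ∈ LinearMap.range
      (TensorProduct.map V.subtype (LinearMap.id (R := k) (M := A))) := by
  unfold Finsupp.sum
  refine Submodule.sum_mem _ (fun j hj => ⟨(⟨c j, hc j hj⟩ : V) ⊗ₜ[k] f j, by simp⟩)

lemma mem_range_right (V : Submodule k A) {ι : Type} (c : ι →₀ A) (f : ι → A)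
    (hc : ∀ j ∈ c.support, c j ∈ V) :
    (c.sum fun j d => f j ⊗ₜ[k] d) ∈ LinearMap.range
      (TensorProduct.map (LinearMap.id (R := k) (M := A)) V.subtype) := by
  unfold Finsupp.sum
  refine Submodule.sum_mem _ (fun j hj => ⟨f j ⊗ₜ[k] (⟨c j, hc j hj⟩ : V), by simp⟩)

lemma range_subsub_le (V : Submodule k A) (W : Subalgebra k A) (hVW : ∀ v ∈ V, v ∈ W)
    (u : A ⊗[k] A) (hu : u ∈ LinearMap.range (TensorProduct.map V.subtype V.subtype)) :
    u ∈ tensorSq k A W := by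
  obtain ⟨t, rfl⟩ := hu
  induction t using TensorProduct.induction_on with
  | zero => simp only [map_zero]; exact Subalgebra.zero_mem _
  | tmul v w =>
      simp only [TensorProduct.map_tmul, Submodule.coe_subtype]
      have he : (v : A) ⊗ₜ[k] (w : A) = ((v : A) ⊗ₜ[k] (1:A)) * ((1:A) ⊗ₜ[k] (w : A)) := by
        rw [Algebra.TensorProduct.tmul_mul_tmul, mul_one, one_mul]
      rw [he]
      exact mul_mem (Algebra.subset_adjoin ⟨v, hVW v v.2, Or.inl rfl⟩)
        (Algebra.subset_adjoin ⟨w, hVW w w.2, Or.inr rfl⟩)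
  | add a b ha hb => rw [map_add]; exact add_mem ha hb

end Intersect

section Final

theorem final (B : Biring k A) (s : Finset A) :
    ∃ W : Subalgebra k A, W.FG ∧ (↑s : Set A) ⊆ (W : Set A) ∧
      (∀ w ∈ W, B.antipode w ∈ W) ∧
      (∀ w ∈ W, B.coadd w ∈ tensorSq k A W) ∧
      (∀ w ∈ W, B.comul w ∈ tensorSq k A W) := by
  classical
  set bB : Module.Basis (Module.Free.ChooseBasisIndex k (A ⊗[k] A)) k (A ⊗[k] A) :=
    Module.Free.chooseBasis k (A ⊗[k] A) with hbB
  set G : Set A := ⋃ x ∈ (↑s : Set A), Fc B bB x '' ↑(Fc B bB x).support with hG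
  have hGfin : G.Finite :=
    Set.Finite.biUnion s.finite_toSet (fun x _ => ((Fc B bB x).support.finite_toSet.image _))
  set V : Submodule k A := Submodule.span k G with hV
  set W : Subalgebra k A := Algebra.adjoin k G with hW
  have hVW : ∀ v ∈ V, v ∈ W := by
    intro v hv
    have hle : V ≤ Subalgebra.toSubmodule W :=
      Submodule.span_le.mpr (fun g hg => Algebra.subset_adjoin hg)
    exact hle hv
  have hFV : ∀ v ∈ V, ∀ m, Fc B bB v m ∈ V := by
    intro v hv
    refine Submodule.span_induction (p := fun y _ => ∀ m, Fc B bB y m ∈ V)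
      ?_ ?_ ?_ ?_ hv
    · intro g hg m
      rw [hG] at hg
      obtain ⟨x, hx, hgi⟩ := Set.mem_iUnion₂.mp hg
      obtain ⟨j, hj, rfl⟩ := hgi
      have hm := main_closure B bB x j m
      have hsub : Submodule.span k (Fc B bB x '' ↑(Fc B bB x).support) ≤ V := by
        refine Submodule.span_le.mpr (fun y hy => Submodule.subset_span ?_)
        exact Set.mem_biUnion hx hy
      exact hsub hm
    · intro m; rw [Fc_zero]; exact V.zero_mem
    · intro x y hx hy ihx ihy m
      rw [Fc_add, Finsupp.add_apply]
      exact V.add_mem (ihx m) (ihy m)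
    · intro c x hx ihx m
      rw [Fc_smul, Finsupp.smul_apply]
      exact V.smul_mem c (ihx m)
  have hsV : ∀ x ∈ (↑s : Set A), x ∈ V := by
    intro x hx
    rw [counit_elem B bB x]
    unfold Finsupp.sum
    exact Submodule.sum_mem _ (fun j hj => Submodule.smul_mem _ _
      (Submodule.subset_span (Set.mem_biUnion hx (Set.mem_image_of_mem _ hj))))
  refine ⟨W, ?_, ?_, ?_, ?_, ?_⟩
  · exact Subalgebra.fg_def.mpr ⟨G, hGfin, rfl⟩
  · intro x hx
    exact hVW x (hsV x hx)
  · intro w hw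
    refine Algebra.adjoin_induction (p := fun y _ => B.antipode y ∈ W) ?_ ?_ ?_ ?_ hw
    · intro g hg
      have hgV : g ∈ V := Submodule.subset_span hg
      rw [antipode_elem B bB g]
      unfold Finsupp.sum
      refine Subalgebra.sum_mem _ (fun j hj => ?_)
      exact Subalgebra.smul_mem _ (hVW _ (hFV g hgV j)) _
    · intro r; rw [AlgHom.commutes]; exact W.algebraMap_mem r
    · intro x y _ _ ihx ihy; rw [map_add]; exact add_mem ihx ihy
    · intro x y _ _ ihx ihy; rw [map_mul]; exact mul_mem ihx ihy
  · intro w hw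
    refine Algebra.adjoin_induction (p := fun y _ => B.coadd y ∈ tensorSq k A W)
      ?_ ?_ ?_ ?_ hw
    · intro g hg
      have hgV : g ∈ V := Submodule.subset_span hg
      have h1 : B.coadd g ∈ LinearMap.range
          (TensorProduct.map V.subtype (LinearMap.id (R := k) (M := A))) := by
        rw [coadd_elem B bB g]
        exact mem_range_left V _ _ (fun j _ => hFV g hgV j)
      have h2 : B.coadd g ∈ LinearMap.range
          (TensorProduct.map (LinearMap.id (R := k) (M := A)) V.subtype) := by
        rw [coadd_elem_swap B bB g]
        exact mem_range_right V _ _ (fun j _ => hFV g hgV j)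
      exact range_subsub_le V W hVW _ (tensor_intersect V _ h1 h2)
    · intro r; rw [AlgHom.commutes]; exact (tensorSq k A W).algebraMap_mem r
    · intro x y _ _ ihx ihy; rw [map_add]; exact add_mem ihx ihy
    · intro x y _ _ ihx ihy; rw [map_mul]; exact mul_mem ihx ihy
  · intro w hw
    refine Algebra.adjoin_induction (p := fun y _ => B.comul y ∈ tensorSq k A W)
      ?_ ?_ ?_ ?_ hw
    · intro g hg
      have hgV : g ∈ V := Submodule.subset_span hg
      have h1 : B.comul g ∈ LinearMap.range
          (TensorProduct.map V.subtype (LinearMap.id (R := k) (M := A))) := by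
        rw [comul_elem B bB g]
        exact mem_range_left V _ _ (fun j _ => hFV g hgV j)
      have h2 : B.comul g ∈ LinearMap.range
          (TensorProduct.map (LinearMap.id (R := k) (M := A)) V.subtype) := by
        rw [comul_elem_swap B bB g]
        exact mem_range_right V _ _ (fun j _ => hFV g hgV j)
      exact range_subsub_le V W hVW _ (tensor_intersect V _ h1 h2)
    · intro r; rw [AlgHom.commutes]; exact (tensorSq k A W).algebraMap_mem r
    · intro x y _ _ ihx ihy; rw [map_add]; exact add_mem ihx ihy
    · intro x y _ _ ihx ihy; rw [map_mul]; exact mul_mem ihx ihy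

end Final


end BiringAux

/-- **Theorem 2.8**: every finite subset of a `k`-biring `A` is contained in a finitely
generated `k`-subalgebra `W` that is stable under the antipode and satisfies
`Δ⁺(W) ⊆ W ⊗ W` and `Δ×(W) ⊆ W ⊗ W`; consequently every affine ring scheme over a field is a
filtered inverse limit of ring schemes of finite type. -/
theorem biring_filtered_union_of_finiteType_subbirings
    (k A : Type) [Field k] [CommRing A] [Algebra k A] (B : Biring k A)
    (s : Finset A) :
    ∃ W : Subalgebra k A, W.FG ∧ (↑s : Set A) ⊆ (W : Set A) ∧
      (∀ w ∈ W, B.antipode w ∈ W) ∧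
      (∀ w ∈ W, B.coadd w ∈ tensorSq k A W) ∧
      (∀ w ∈ W, B.comul w ∈ tensorSq k A W) :=
  BiringAux.final B s
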